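/- For the two-source M/G/1/1 queue under the source-agnostic preemptive policy, the average peak AoI of source 1, given as the derivative at s = 0 of M̂_{A_1}(s) = λ_1 M_S(s−λ)^2/(L_λ(λ_1 M_S(s−λ) − s)), equals (1 + λ_1 L'_λ)/(λ_1 L_λ), where L'_λ = E[S e^{-λS}] = M'_S(−λ). -/

import Mathlib

open MeasureTheory Filter

/-- For the two-source M/G/1/1 queue under the source-agnostic preemptive policy, the
derivative at `s = 0` of `M̂_{A_1}(s) = λ_1 M_S(s-λ)²/(L_λ(λ_1 M_S(s-λ) - s))` equals
`(1 + λ_1 L'_λ)/(λ_1 L_λ)`, where `L_λ = M_S(-λ)` and `L'_λ = M'_S(-λ) = E[S e^{-λS}]`: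
the average peak AoI of source 1 is `Â_1 = (1 + λ_1 L'_λ)/(λ_1 L_λ)`. -/
theorem avg_peak_aoi_source_agnostic {Ω : Type*} [MeasurableSpace Ω] (μ : Measure Ω)
    [IsProbabilityMeasure μ] (S : Ω → ℝ) (hSnn : ∀ ω, 0 ≤ S ω)
    (MS : ℝ → ℝ) (hMS : ∀ r, MS r = ∫ ω, Real.exp (r * S ω) ∂μ)
    (l1 lam : ℝ) (hl1 : 0 < l1) (hlam : 0 < lam)
    (hdiff : ∀ᶠ x in nhds (-lam), DifferentiableAt ℝ MS x)
    (hL : 0 < MS (-lam)) :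
    deriv (fun s => l1 * MS (s - lam) ^ 2 / (MS (-lam) * (l1 * MS (s - lam) - s))) 0 =
      (1 + l1 * deriv MS (-lam)) / (l1 * MS (-lam)) := by
  set L := MS (-lam) with hLdef
  set M' := deriv MS (-lam) with hM'def
  have hM : HasDerivAt MS M' (-lam) := hdiff.self_of_nhds.hasDerivAt
  have hinner : HasDerivAt (fun s : ℝ => s - lam) 1 0 :=
    (hasDerivAt_id 0).sub_const lam
  have hcomp : HasDerivAt (fun s : ℝ => MS (s - lam)) M' 0 := by
    have := HasDerivAt.comp 0 (by simpa using hM) hinner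
    rw [mul_one] at this
    exact this
  have hnum : HasDerivAt (fun s : ℝ => l1 * MS (s - lam) ^ 2) (l1 * (2 * L * M')) 0 := by
    have := (hcomp.pow 2).const_mul l1
    simpa [hLdef, mul_comm, mul_assoc, mul_left_comm] using this
  have hden : HasDerivAt (fun s : ℝ => L * (l1 * MS (s - lam) - s))
      (L * (l1 * M' - 1)) 0 := by
    have := ((hcomp.const_mul l1).sub (hasDerivAt_id 0)).const_mul L
    simpa using this
  have hne : L * (l1 * MS ((0:ℝ) - lam) - 0) ≠ 0 := by
    have : MS ((0:ℝ) - lam) = L := by norm_num [hLdef]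
    rw [this, sub_zero]
    positivity
  have hdiv := (hnum.div hden hne).deriv
  simp only [Pi.div_def] at hdiv
  rw [hdiv]
  have h0 : MS ((0:ℝ) - lam) = L := by norm_num [hLdef]
  rw [h0]
  have hLne : L ≠ 0 := ne_of_gt hL
  have hl1ne : l1 ≠ 0 := ne_of_gt hl1
  field_simp
  ring
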